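/- Let X be a compact metric space and f : X → X a continuous map, and let A, R ⊆ X. The following are equivalent: (i) A is an attractor of f and R = A* = {x ∈ X : ω(x) ∩ A = ∅} is its dual repeller; (ii) A and R are disjoint compact sets, A is invariant, R is forward invariant, and for every x ∈ X \ (A ∪ R) one has ω(x) ⊆ A and every backward orbit γ through x satisfies α_o(γ) ⊆ R. -/

import Mathlib

open Set

/-- The maximal invariant set in `U`: the union of all subsets `S ⊆ U` with `f '' S = S`. -/
def MaxInv {Y : Type*} (f : Y → Y) (U : Set Y) : Set Y :=
  ⋃₀ {S : Set Y | S ⊆ U ∧ f '' S = S}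

/-- The maximal forward invariant set in `U`: the union of all subsets `S ⊆ U`
with `f '' S ⊆ S`. -/
def MaxInvPlus {Y : Type*} (f : Y → Y) (U : Set Y) : Set Y :=
  ⋃₀ {S : Set Y | S ⊆ U ∧ f '' S ⊆ S}

/-- The omega-limit set `ω(U) = ⋂_{n ≥ 0} cl (⋃_{m ≥ n} f^[m] '' U)`. -/
def OmegaLim {Y : Type*} [TopologicalSpace Y] (f : Y → Y) (U : Set Y) : Set Y :=
  ⋂ n : ℕ, closure (⋃ m ≥ n, f^[m] '' U)

/-- The alpha-limit set `α(U) = ⋂_{n ≥ 0} cl (⋃_{m ≥ n} (f^[m]) ⁻¹' U)`. -/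
def AlphaLim {Y : Type*} [TopologicalSpace Y] (f : Y → Y) (U : Set Y) : Set Y :=
  ⋂ n : ℕ, closure (⋃ m ≥ n, f^[m] ⁻¹' U)

/-- A trapping region: a forward invariant set `U` with `f^[n] '' cl U ⊆ int U`
for some `n ≥ 1`. -/
def IsTrappingRegion {Y : Type*} [TopologicalSpace Y] (f : Y → Y) (U : Set Y) : Prop :=
  f '' U ⊆ U ∧ ∃ n : ℕ, 1 ≤ n ∧ f^[n] '' closure U ⊆ interior U

/-- An attractor: `A = Inv(U)` for some trapping region `U`. -/
def IsAttractor {Y : Type*} [TopologicalSpace Y] (f : Y → Y) (A : Set Y) : Prop :=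
  ∃ U : Set Y, IsTrappingRegion f U ∧ A = MaxInv f U

/-- An attracting neighborhood: `ω(U) ⊆ int U`. -/
def IsAttractingNbhd {Y : Type*} [TopologicalSpace Y] (f : Y → Y) (U : Set Y) : Prop :=
  OmegaLim f U ⊆ interior U

/-- A repelling region: a backward invariant set `U` with `(f^[n]) ⁻¹' cl U ⊆ int U`
for some `n ≥ 1`. -/
def IsRepellingRegion {Y : Type*} [TopologicalSpace Y] (f : Y → Y) (U : Set Y) : Prop :=
  f ⁻¹' U ⊆ U ∧ ∃ n : ℕ, 1 ≤ n ∧ f^[n] ⁻¹' closure U ⊆ interior U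

/-- A repeller: `R = Inv⁺(U)` for some repelling region `U`. -/
def IsRepeller {Y : Type*} [TopologicalSpace Y] (f : Y → Y) (R : Set Y) : Prop :=
  ∃ U : Set Y, IsRepellingRegion f U ∧ R = MaxInvPlus f U

/-- A repelling neighborhood: `α(U) ⊆ int U`. -/
def IsRepellingNbhd {Y : Type*} [TopologicalSpace Y] (f : Y → Y) (U : Set Y) : Prop :=
  AlphaLim f U ⊆ interior U

/-- A backward orbit: a sequence `γ : ℕ → Y` with `f (γ (k+1)) = γ k` for all `k`.
A backward orbit through `x` additionally satisfies `γ 0 = x`. -/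
def IsBackwardOrbit {Y : Type*} (f : Y → Y) (γ : ℕ → Y) : Prop :=
  ∀ k : ℕ, f (γ (k + 1)) = γ k

/-- The orbital alpha-limit set `α_o(γ) = ⋂_{n ≥ 0} cl {γ m : m ≥ n}`. -/
def OrbAlpha {Y : Type*} [TopologicalSpace Y] (γ : ℕ → Y) : Set Y :=
  ⋂ n : ℕ, closure (γ '' {m : ℕ | n ≤ m})

/-- The dual repeller of an attractor `A`: `A* = {x : ω(x) ∩ A = ∅}`. -/
def DualRepeller {Y : Type*} [TopologicalSpace Y] (f : Y → Y) (A : Set Y) : Set Y :=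
  {x : Y | OmegaLim f {x} ∩ A = ∅}

/-- The dual attractor of a repeller `R`:
`R* = {x : ∃ backward orbit γ through x with α_o(γ) ∩ R = ∅}`. -/
def DualAttractor {Y : Type*} [TopologicalSpace Y] (f : Y → Y) (R : Set Y) : Set Y :=
  {x : Y | ∃ γ : ℕ → Y, γ 0 = x ∧ IsBackwardOrbit f γ ∧ OrbAlpha γ ∩ R = ∅}

open Set Metric Filter Topology

set_option linter.unusedSectionVars false

section ARPAux

variable {X : Type*} [MetricSpace X] [CompactSpace X]

private lemma backOrbit_iter {f : X → X} {γ : ℕ → X} (hγ : IsBackwardOrbit f γ) :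
    ∀ i m, i ≤ m → f^[i] (γ m) = γ (m - i) := by
  intro i
  induction i with
  | zero => simp
  | succ i ih =>
    intro m him
    obtain ⟨m', rfl⟩ : ∃ m', m = m' + 1 := ⟨m - 1, by omega⟩
    rw [Function.iterate_succ_apply, hγ m', ih m' (by omega)]
    congr 1; omega

private lemma omegaLim_singleton_subset_of_closed {f : X → X} {x : X} {C : Set X}
    (hC : IsClosed C) {t : ℕ} (h : ∀ m, t ≤ m → f^[m] x ∈ C) : OmegaLim f {x} ⊆ C := by
  intro y hy
  have hy' := mem_iInter.mp hy t
  have hsub : (⋃ m ≥ t, f^[m] '' ({x} : Set X)) ⊆ C := by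
    simp only [iUnion_subset_iff, image_singleton, singleton_subset_iff]
    exact h
  have := closure_mono hsub hy'
  rwa [hC.closure_eq] at this

private lemma omegaLim_singleton_nonempty (f : X → X) (x : X) :
    (OmegaLim f {x}).Nonempty := by
  apply IsCompact.nonempty_iInter_of_sequence_nonempty_isCompact_isClosed
  · intro n
    apply closure_mono
    exact biUnion_subset_biUnion_left (fun m hm => le_trans (Nat.le_succ n) hm)
  · intro n
    exact ⟨f^[n] x, subset_closure (mem_biUnion (le_refl n) (mem_image_of_mem _ rfl))⟩
  · exact isClosed_closure.isCompact
  · intro n; exact isClosed_closure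

private lemma orbAlpha_subset_of_closed {γ : ℕ → X} {C : Set X} (hC : IsClosed C)
    (h : ∀ m, γ m ∈ C) : OrbAlpha γ ⊆ C := by
  intro y hy
  have hy' := mem_iInter.mp hy 0
  have hsub : γ '' {m : ℕ | 0 ≤ m} ⊆ C := by
    rintro _ ⟨m, -, rfl⟩; exact h m
  have := closure_mono hsub hy'
  rwa [hC.closure_eq] at this

private lemma orbAlpha_nonempty (γ : ℕ → X) : (OrbAlpha γ).Nonempty := by
  apply IsCompact.nonempty_iInter_of_sequence_nonempty_isCompact_isClosed
  · intro n
    exact closure_mono (image_mono (fun m hm => le_trans (Nat.le_succ n) hm))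
  · intro n
    exact ⟨γ n, subset_closure (mem_image_of_mem _ (by simp))⟩
  · exact isClosed_closure.isCompact
  · intro n; exact isClosed_closure

private lemma uniform_lemma {f : X → X} (hf : Continuous f) {A R V V' : Set X}
    (hVR : ∀ y ∈ closure V, y ∉ R)
    (hAV' : A ⊆ V') (hV' : IsOpen V')
    (hback : ∀ x, x ∉ A → x ∉ R →
      ∀ γ : ℕ → X, γ 0 = x → IsBackwardOrbit f γ → OrbAlpha γ ⊆ R) :
    ∃ N : ℕ, ∀ m, N ≤ m → ∀ x : X,
      (∀ k, k ≤ m → f^[k] x ∈ closure V) → f^[m] x ∈ V' := by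
  by_contra hcon
  push_neg at hcon
  choose m hm x hx hx' using hcon
  set σ : ℕ → ℕ → X := fun N i => f^[m N - i] (x N) with hσ
  obtain ⟨γ, -, φ, hφ, hconv⟩ :=
    (CompactSpace.isCompact_univ (X := ℕ → X)).tendsto_subseq (x := σ) (fun n => mem_univ _)
  have hpt : ∀ i, Tendsto (fun j => σ (φ j) i) atTop (𝓝 (γ i)) := fun i =>
    (tendsto_pi_nhds.mp hconv) i
  have hφge : ∀ j, j ≤ φ j := fun j => hφ.le_apply
  have hγV : ∀ i, γ i ∈ closure V := by
    intro i
    exact isClosed_closure.mem_of_tendsto (hpt i)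
      (Eventually.of_forall fun j => hx (φ j) _ (Nat.sub_le _ _))
  have hγbo : IsBackwardOrbit f γ := by
    intro i
    have h1 : Tendsto (fun j => f (σ (φ j) (i + 1))) atTop (𝓝 (f (γ (i + 1)))) :=
      (hf.tendsto _).comp (hpt (i + 1))
    have h2 : ∀ᶠ j in atTop, f (σ (φ j) (i + 1)) = σ (φ j) i := by
      filter_upwards [eventually_ge_atTop (i + 1)] with j hj
      have hij : i + 1 ≤ m (φ j) := le_trans hj (le_trans (hφge j) (hm (φ j)))
      simp only [hσ]
      rw [← Function.iterate_succ_apply' f]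
      congr 1
      omega
    exact tendsto_nhds_unique (h1.congr' h2) (hpt i)
  have hγ0 : γ 0 ∉ V' := by
    have hmem : ∀ j, σ (φ j) 0 ∈ V'ᶜ := by
      intro j
      simp only [hσ, Nat.sub_zero]
      exact hx' (φ j)
    exact hV'.isClosed_compl.mem_of_tendsto (hpt 0) (Eventually.of_forall hmem)
  have hγ0A : γ 0 ∉ A := fun h => hγ0 (hAV' h)
  have hγ0R : γ 0 ∉ R := hVR _ (hγV 0)
  have hsub := hback _ hγ0A hγ0R γ rfl hγbo
  obtain ⟨z, hz⟩ := orbAlpha_nonempty γ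
  exact hVR z (orbAlpha_subset_of_closed isClosed_closure hγV hz) (hsub hz)

end ARPAux

/-- Characterization of attractor-repeller pairs. -/
theorem attractor_repeller_pair_iff
    {X : Type*} [MetricSpace X] [CompactSpace X]
    (f : X → X) (hf : Continuous f) (A R : Set X) :
    (IsAttractor f A ∧ R = DualRepeller f A) ↔
      (Disjoint A R ∧ IsCompact A ∧ IsCompact R ∧
        f '' A = A ∧ f '' R ⊆ R ∧
        ∀ x ∈ (A ∪ R)ᶜ,
          OmegaLim f {x} ⊆ A ∧
          ∀ γ : ℕ → X, γ 0 = x → IsBackwardOrbit f γ → OrbAlpha γ ⊆ R) := by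
  constructor
  · rintro ⟨⟨U, ⟨hUf, n, hn1, hn⟩, hAeq⟩, hReq⟩
    set K := closure U with hK
    have hKcl : IsClosed K := isClosed_closure
    have hfK : f '' K ⊆ K :=
      (image_closure_subset_closure_image hf).trans (closure_mono hUf)
    have hUK : U ⊆ K := subset_closure
    have hstep : ∀ (T : Set X) (k : ℕ), f^[k+1] '' T = f '' (f^[k] '' T) := by
      intro T k
      rw [Function.iterate_succ', Set.image_comp]
    have hiterK : ∀ k, f^[k] '' K ⊆ K := by
      intro k
      induction k with
      | zero => simp
      | succ k ih =>
        rw [hstep]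
        exact (image_mono ih).trans hfK
    have hdec : ∀ j k, j ≤ k → f^[k] '' K ⊆ f^[j] '' K := by
      intro j k hjk
      obtain ⟨i, rfl⟩ : ∃ i, k = j + i := ⟨k - j, by omega⟩
      rw [Function.iterate_add, Set.image_comp]
      exact image_mono (hiterK i)
    set A' := ⋂ k, f^[k] '' K with hA'
    have hcompk : ∀ k, IsCompact (f^[k] '' K) := fun k =>
      hKcl.isCompact.image (hf.iterate k)
    have hA'cl : IsClosed A' := isClosed_iInter fun k => (hcompk k).isClosed
    have hA'int : A' ⊆ interior U := fun x hx => hn (mem_iInter.mp hx n)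
    have hA'U : A' ⊆ U := hA'int.trans interior_subset
    have hfA' : f '' A' = A' := by
      apply Subset.antisymm
      · rintro _ ⟨a, ha, rfl⟩
        apply mem_iInter.mpr; intro k
        have h1 : f a ∈ f^[k+1] '' K := by
          rw [hstep]
          exact mem_image_of_mem f (mem_iInter.mp ha k)
        exact hdec k (k+1) (Nat.le_succ k) h1
      · intro xx hxx
        set C : ℕ → Set X := fun k => f ⁻¹' {xx} ∩ f^[k] '' K with hC
        have hCne : ∀ k, (C k).Nonempty := by
          intro k
          have h1 : xx ∈ f '' (f^[k] '' K) := by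
            rw [← hstep]
            exact mem_iInter.mp hxx (k+1)
          obtain ⟨y, hy, hfy⟩ := h1
          exact ⟨y, ⟨hfy, hy⟩⟩
        have hCcl : ∀ k, IsClosed (C k) :=
          fun k => (isClosed_singleton.preimage hf).inter (hcompk k).isClosed
        have hCdec : ∀ k, C (k+1) ⊆ C k := fun k =>
          inter_subset_inter_right _ (hdec k (k+1) (Nat.le_succ k))
        obtain ⟨y, hy⟩ := IsCompact.nonempty_iInter_of_sequence_nonempty_isCompact_isClosed
          C hCdec hCne (hCcl 0).isCompact hCcl
        have hy' := mem_iInter.mp hy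
        exact ⟨y, mem_iInter.mpr fun k => (hy' k).2, (hy' 0).1⟩
    have hMaxInv : MaxInv f U = A' := by
      apply Subset.antisymm
      · rintro xx ⟨S, ⟨hSU, hSinv⟩, hxS⟩
        have hiterS : ∀ k, f^[k] '' S = S := by
          intro k
          induction k with
          | zero => simp
          | succ k ih => rw [hstep, ih, hSinv]
        apply mem_iInter.mpr; intro k
        rw [← hiterS k] at hxS
        exact image_mono (hSU.trans hUK) hxS
      · exact subset_sUnion_of_mem ⟨hA'U, hfA'⟩
    rw [hMaxInv] at hAeq
    subst hAeq
    subst hReq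
    have hfwdU : ∀ x t, f^[t] x ∈ U → ∀ s, t ≤ s → f^[s] x ∈ U := by
      intro x t ht s hs
      induction s, hs using Nat.le_induction with
      | base => exact ht
      | succ s hs ih =>
        rw [Function.iterate_succ_apply']
        exact hUf (mem_image_of_mem f ih)
    have hR1 : ∀ x t, f^[t] x ∈ U → OmegaLim f {x} ⊆ A' := by
      intro x t ht
      apply subset_iInter; intro k
      apply omegaLim_singleton_subset_of_closed (hcompk k).isClosed (t := t + k)
      intro m hm
      have h1 : f^[m] x = f^[k] (f^[m-k] x) := by
        rw [← Function.iterate_add_apply]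
        congr 1; omega
      rw [h1]
      exact mem_image_of_mem _ (hUK (hfwdU x t ht (m - k) (by omega)))
    have hRchar : ∀ x, x ∈ DualRepeller f A' ↔ ∀ k, f^[k] x ∉ U := by
      intro x
      simp only [DualRepeller, mem_setOf_eq]
      constructor
      · intro hx k hk
        obtain ⟨w, hw⟩ := omegaLim_singleton_nonempty f x
        have h2 : w ∈ OmegaLim f {x} ∩ A' := ⟨hw, hR1 x k hk hw⟩
        rw [hx] at h2
        exact h2
      · intro hx
        have h2 : OmegaLim f {x} ⊆ (interior U)ᶜ := by
          apply omegaLim_singleton_subset_of_closed isOpen_interior.isClosed_compl (t := 0)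
          exact fun m _ hm => hx m (interior_subset hm)
        apply eq_empty_iff_forall_notMem.mpr
        rintro y ⟨hy1, hy2⟩
        exact h2 hy1 (hA'int hy2)
    have hRchar2 : DualRepeller f A' = ⋂ k, f^[k] ⁻¹' (interior U)ᶜ := by
      ext x
      rw [hRchar]
      simp only [mem_iInter, mem_preimage, mem_compl_iff]
      constructor
      · exact fun h k hk => h k (interior_subset hk)
      · intro h k hk
        apply h (k + n)
        have h1 : f^[k+n] x = f^[n] (f^[k] x) := by
          rw [← Function.iterate_add_apply]
          congr 1; omega
        rw [h1]
        exact hn (mem_image_of_mem _ (hUK hk))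
    have hRcl : IsClosed (DualRepeller f A') := by
      rw [hRchar2]
      exact isClosed_iInter fun k =>
        isOpen_interior.isClosed_compl.preimage (hf.iterate k)
    refine ⟨?_, hA'cl.isCompact, hRcl.isCompact, hfA', ?_, ?_⟩
    · rw [Set.disjoint_left]
      intro a ha haR
      exact (hRchar a).mp haR 0 (hA'U ha)
    · rintro _ ⟨r, hr, rfl⟩
      rw [hRchar]
      intro k
      rw [← Function.iterate_succ_apply]
      exact (hRchar r).mp hr (k+1)
    · intro x hx
      simp only [mem_compl_iff, mem_union, not_or] at hx
      obtain ⟨hxA, hxR⟩ := hx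
      have hxU : ∃ t, f^[t] x ∈ U := by
        by_contra h
        push_neg at h
        exact hxR ((hRchar x).mpr h)
      obtain ⟨t, ht⟩ := hxU
      refine ⟨hR1 x t ht, ?_⟩
      intro γ hγ0 hγbo z hz
      rw [hRchar z]
      by_contra hzR
      push_neg at hzR
      obtain ⟨k, hk⟩ := hzR
      have hkint : f^[k+n] z ∈ interior U := by
        have h1 : f^[k+n] z = f^[n] (f^[k] z) := by
          rw [← Function.iterate_add_apply]
          congr 1; omega
        rw [h1]
        exact hn (mem_image_of_mem _ (hUK hk))
      have hsU : ∀ j, ∃ s, j ≤ s ∧ γ s ∈ U := by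
        intro j
        have hz' := mem_iInter.mp hz (j + (k + n))
        have hopen : IsOpen (f^[k+n] ⁻¹' interior U) :=
          isOpen_interior.preimage (hf.iterate _)
        obtain ⟨w, hw1, hw2⟩ := mem_closure_iff.mp hz' _ hopen hkint
        obtain ⟨mm, hmm, rfl⟩ := hw2
        have hmm' : j + (k + n) ≤ mm := hmm
        refine ⟨mm - (k + n), by omega, ?_⟩
        have h3 := backOrbit_iter hγbo (k+n) mm (by omega)
        rw [mem_preimage, h3] at hw1
        exact interior_subset hw1
      refine absurd (mem_iInter.mpr fun k' => ?_) hxA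
      obtain ⟨s, hs, hsU'⟩ := hsU k'
      have h0 : f^[s] (γ s) = x := by
        have h4 := backOrbit_iter hγbo s s le_rfl
        simpa [hγ0] using h4
      rw [← h0]
      exact hdec k' s hs (mem_image_of_mem _ (hUK hsU'))
  · rintro ⟨hdisj, hAcomp, hRcomp, hAinv, hRfwd, hout⟩
    have hAorb : ∀ a ∈ A, ∀ m, f^[m] a ∈ A := by
      intro a ha m
      induction m with
      | zero => exact ha
      | succ m ih =>
        rw [Function.iterate_succ_apply']
        have h1 := mem_image_of_mem f ih
        rwa [hAinv] at h1
    have hRorb : ∀ r ∈ R, ∀ m, f^[m] r ∈ R := by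
      intro r hr m
      induction m with
      | zero => exact hr
      | succ m ih =>
        rw [Function.iterate_succ_apply']
        exact hRfwd (mem_image_of_mem f ih)
    have hback : ∀ x, x ∉ A → x ∉ R →
        ∀ γ : ℕ → X, γ 0 = x → IsBackwardOrbit f γ → OrbAlpha γ ⊆ R :=
      fun x hxA hxR γ h1 h2 => (hout x (by simp [hxA, hxR])).2 γ h1 h2
    have hRdual : R = DualRepeller f A := by
      ext x
      simp only [DualRepeller, mem_setOf_eq]
      constructor
      · intro hx
        have h1 : OmegaLim f {x} ⊆ R :=
          omegaLim_singleton_subset_of_closed hRcomp.isClosed (t := 0)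
            (fun m _ => hRorb x hx m)
        apply eq_empty_iff_forall_notMem.mpr
        rintro y ⟨hy1, hy2⟩
        exact (Set.disjoint_right.mp hdisj (h1 hy1)) hy2
      · intro hx
        by_contra hxR
        obtain ⟨w, hw⟩ := omegaLim_singleton_nonempty f x
        have hωA : OmegaLim f {x} ⊆ A := by
          by_cases hxA : x ∈ A
          · exact omegaLim_singleton_subset_of_closed hAcomp.isClosed (t := 0)
              (fun m _ => hAorb x hxA m)
          · exact (hout x (by simp [hxA, hxR])).1
        have h2 : w ∈ OmegaLim f {x} ∩ A := ⟨hw, hωA hw⟩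
        rw [hx] at h2
        exact h2
    refine ⟨?_, hRdual⟩
    rcases eq_empty_or_nonempty A with hAe | hAne
    · refine ⟨∅, ⟨by simp, 1, le_rfl, by simp⟩, ?_⟩
      rw [hAe]
      apply Subset.antisymm (empty_subset _)
      rintro x ⟨S, ⟨hS, -⟩, hxS⟩
      exact hS hxS
    · obtain ⟨δ, hδ, hthick⟩ := hdisj.exists_thickenings hAcomp hRcomp.isClosed
      set V := thickening (δ/2) A with hVdef
      have hAV : A ⊆ V := self_subset_thickening (by linarith) A
      have hclV : closure V ⊆ thickening δ A :=
        (closure_thickening_subset_cthickening _ _).trans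
          (cthickening_subset_thickening' (by linarith) (by linarith) A)
      have hclVR : ∀ y ∈ closure V, y ∉ R := by
        intro y hy hyR
        exact Set.disjoint_left.mp hthick (hclV hy) (self_subset_thickening hδ R hyR)
      have hVopen : IsOpen V := isOpen_thickening
      have hAsubopen : A ⊆ f ⁻¹' V ∩ V := by
        intro a ha
        refine ⟨?_, hAV ha⟩
        have h1 := mem_image_of_mem f ha
        rw [hAinv] at h1
        exact hAV h1
      obtain ⟨δ₁, hδ₁, hthick₁⟩ := hAcomp.exists_thickening_subset_open
        ((hVopen.preimage hf).inter hVopen) hAsubopen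
      set V₁ := thickening (δ₁/2) A with hV₁def
      have hAV₁ : A ⊆ V₁ := self_subset_thickening (by linarith) A
      have hclV₁ : closure V₁ ⊆ f ⁻¹' V ∩ V :=
        ((closure_thickening_subset_cthickening _ _).trans
          (cthickening_subset_thickening' (by linarith) (by linarith) A)).trans hthick₁
      have hV₁open : IsOpen V₁ := isOpen_thickening
      obtain ⟨N₁, hN₁⟩ := uniform_lemma hf hclVR hAV₁ hV₁open hback
      have key : ∀ x, (∀ k, k ≤ N₁ → f^[k] x ∈ V) → ∀ m, f^[m] x ∈ V := by
        intro x hx m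
        induction m using Nat.strong_induction_on with
        | _ m ih =>
          by_cases hm : m ≤ N₁
          · exact hx m hm
          · push_neg at hm
            obtain ⟨m', rfl⟩ : ∃ m', m = m' + 1 := ⟨m - 1, by omega⟩
            have hpre : ∀ k, k ≤ m' → f^[k] x ∈ closure V :=
              fun k hk => subset_closure (ih k (by omega))
            have h1 : f^[m'] x ∈ V₁ := hN₁ m' (by omega) x hpre
            rw [Function.iterate_succ_apply']
            exact (hclV₁ (subset_closure h1)).1
      set W := {x : X | ∀ k, k ≤ N₁ → f^[k] x ∈ V} with hWdef
      have hWopen : IsOpen W := by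
        have h1 : W = ⋂ k ∈ Set.Iic N₁, f^[k] ⁻¹' V := by
          ext x
          simp [hWdef, Set.mem_Iic]
        rw [h1]
        exact (Set.finite_Iic N₁).isOpen_biInter fun k _ => hVopen.preimage (hf.iterate k)
      have hAW : A ⊆ W := fun a ha k _ => hAV (hAorb a ha k)
      set U := {x : X | ∀ m, f^[m] x ∈ V} with hUdef
      have hWU : W ⊆ U := fun x hx m => key x hx m
      have hUV : U ⊆ V := fun x hx => hx 0
      have hUf : f '' U ⊆ U := by
        rintro _ ⟨u, hu, rfl⟩ m
        rw [← Function.iterate_succ_apply]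
        exact hu (m+1)
      have hUiter : ∀ m, f^[m] '' U ⊆ U := by
        intro m
        induction m with
        | zero => simp
        | succ m ih =>
          rw [Function.iterate_succ', Set.image_comp]
          exact (image_mono ih).trans hUf
      have hclUiter : ∀ x ∈ closure U, ∀ k, f^[k] x ∈ closure U := by
        intro x hx k
        have h1 : f^[k] '' closure U ⊆ closure U :=
          (image_closure_subset_closure_image (hf.iterate k)).trans
            (closure_mono (hUiter k))
        exact h1 (mem_image_of_mem _ hx)
      obtain ⟨N₂, hN₂⟩ := uniform_lemma hf hclVR hAW hWopen hback
      refine ⟨U, ⟨hUf, max N₂ 1, le_max_right _ _, ?_⟩, ?_⟩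
      · rintro _ ⟨x, hx, rfl⟩
        have hpre : ∀ k, k ≤ max N₂ 1 → f^[k] x ∈ closure V :=
          fun k _ => closure_mono hUV (hclUiter x hx k)
        exact interior_maximal hWU hWopen (hN₂ (max N₂ 1) (le_max_left _ _) x hpre)
      · apply Subset.antisymm
        · exact subset_sUnion_of_mem ⟨fun a ha m => hAV (hAorb a ha m), hAinv⟩
        · rintro x ⟨S, ⟨hSU, hSinv⟩, hxS⟩
          by_contra hxA
          have hsur : ∀ y : {y // y ∈ S}, ∃ z : {y // y ∈ S}, f z.1 = y.1 := by
            rintro ⟨y, hy⟩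
            rw [← hSinv] at hy
            obtain ⟨z, hz, hfz⟩ := hy
            exact ⟨⟨z, hz⟩, hfz⟩
          choose g hg using hsur
          set γ : ℕ → X := fun k => (g^[k] ⟨x, hxS⟩).1 with hγdef
          have hγbo : IsBackwardOrbit f γ := by
            intro k
            simp only [hγdef, Function.iterate_succ_apply']
            exact hg (g^[k] ⟨x, hxS⟩)
          have hγS : ∀ k, γ k ∈ S := fun k => (g^[k] ⟨x, hxS⟩).2
          have hγ0 : γ 0 = x := rfl
          have hxR : x ∉ R := hclVR x (subset_closure (hUV (hSU hxS)))
          have hsub := hback x hxA hxR γ hγ0 hγbo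
          obtain ⟨z, hz⟩ := orbAlpha_nonempty γ
          exact hclVR z (orbAlpha_subset_of_closed isClosed_closure
            (fun m => subset_closure (hUV (hSU (hγS m)))) hz) (hsub hz)
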